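/- arXiv:1604.05953 — 7 statements merged into one kernel-verified Lean document; each statement's English description precedes it below -/
import Mathlib

section
/- Let D be a star-shaped set in ℝ^n centered at x*, f : ℝ^n → ℝ^n be C¹ with f(x*) = 0, Y real symmetric, and A(z) = Df(z)^T Y + Y Df(z). If A(z) is negative definite for all z ∈ D, then for every solution x(t) of x' = f(x) and every time t with x(t) ∈ D and x(t) ≠ x*, the derivative d/dt L(x(t)) < 0, where L(x) = (x − x*)^T Y (x − x*). -/
open Matrix


lemma quad_deriv {n : ℕ} (Y : Matrix (Fin n) (Fin n) ℝ) (u w : ℝ → Fin n → ℝ)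
    (u' w' : Fin n → ℝ) (t : ℝ) (hu : HasDerivAt u u' t) (hw : HasDerivAt w w' t) :
    HasDerivAt (fun τ => u τ ⬝ᵥ Y.mulVec (w τ))
      (u' ⬝ᵥ Y.mulVec (w t) + u t ⬝ᵥ Y.mulVec w') t := by
  have hui : ∀ i, HasDerivAt (fun τ => u τ i) (u' i) t := fun i => hasDerivAt_pi.mp hu i
  have hwi : ∀ i, HasDerivAt (fun τ => w τ i) (w' i) t := fun i => hasDerivAt_pi.mp hw i
  have H : HasDerivAt (fun τ => ∑ i, u τ i * ∑ j, Y i j * w τ j)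
      (∑ i, (u' i * ∑ j, Y i j * w t j + u t i * ∑ j, Y i j * w' j)) t := by
    apply HasDerivAt.fun_sum
    intro i _
    exact (hui i).mul (HasDerivAt.fun_sum fun j _ => (hwi j).const_mul (Y i j))
  have h1 : (fun τ => u τ ⬝ᵥ Y.mulVec (w τ)) = fun τ => ∑ i, u τ i * ∑ j, Y i j * w τ j := by
    funext τ; simp [dotProduct, Matrix.mulVec]
  have h2 : u' ⬝ᵥ Y.mulVec (w t) + u t ⬝ᵥ Y.mulVec w'
      = ∑ i, (u' i * ∑ j, Y i j * w t j + u t i * ∑ j, Y i j * w' j) := by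
    simp [dotProduct, Matrix.mulVec, Finset.sum_add_distrib]
  rw [h1, h2]; exact H

/-- If `A(z) = Df(z)ᵀ Y + Y Df(z)` is negative definite on a star-shaped set `D`
centered at a zero `x*` of `f`, then along any solution of `x' = f(x)`,
`d/dt L(x(t)) < 0` whenever `x(t) ∈ D` and `x(t) ≠ x*`. -/
theorem stmt4 {n : ℕ} (D : Set (Fin n → ℝ)) (xs : Fin n → ℝ)
    (hstar : ∀ x ∈ D, ∀ s ∈ Set.Icc (0:ℝ) 1, xs + s • (x - xs) ∈ D)
    (f : (Fin n → ℝ) → (Fin n → ℝ))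
    (Df : (Fin n → ℝ) → Matrix (Fin n) (Fin n) ℝ)
    (hf : ∀ z, HasFDerivAt f ((Df z).mulVecLin.toContinuousLinearMap) z)
    (hDf : Continuous Df) (hxs : f xs = 0)
    (Y : Matrix (Fin n) (Fin n) ℝ) (hY : Y.IsSymm)
    (A : (Fin n → ℝ) → Matrix (Fin n) (Fin n) ℝ)
    (hA : ∀ z, A z = (Df z)ᵀ * Y + Y * Df z)
    (hneg : ∀ z ∈ D, ∀ v : Fin n → ℝ, v ≠ 0 → v ⬝ᵥ (A z).mulVec v < 0)
    (x : ℝ → (Fin n → ℝ)) (hx : ∀ t, HasDerivAt x (f (x t)) t)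
    (t : ℝ) (hxD : x t ∈ D) (hxne : x t ≠ xs) :
    deriv (fun τ => (x τ - xs) ⬝ᵥ Y.mulVec (x τ - xs)) t < 0 := by
  set v : Fin n → ℝ := x t - xs with hv
  have hvne : v ≠ 0 := sub_ne_zero.mpr hxne
  set γ : ℝ → Fin n → ℝ := fun s => xs + s • v with hγ
  have hγd : ∀ s : ℝ, HasDerivAt γ v s := by
    intro s
    rw [hγ]; simpa using ((hasDerivAt_id s).smul_const v).const_add xs
  have hFd : ∀ s : ℝ, HasDerivAt (fun s => f (γ s)) ((Df (γ s)).mulVec v) s := by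
    intro s
    exact (hf (γ s)).comp_hasDerivAt s (hγd s)
  set φ : ℝ → ℝ := fun s => v ⬝ᵥ Y.mulVec (f (γ s)) + (f (γ s)) ⬝ᵥ Y.mulVec v with hφ
  have hφd : ∀ s : ℝ, HasDerivAt φ (v ⬝ᵥ (A (γ s)).mulVec v) s := by
    intro s
    have h1 := quad_deriv Y (fun _ => v) (fun s => f (γ s)) 0 ((Df (γ s)).mulVec v) s
      (hasDerivAt_const s v) (hFd s)
    have h2 := quad_deriv Y (fun s => f (γ s)) (fun _ => v) ((Df (γ s)).mulVec v) 0 s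
      (hFd s) (hasDerivAt_const s v)
    have h := h1.add h2
    refine h.congr_deriv ?_
    rw [hA]
    simp [Matrix.add_mulVec, ← Matrix.mulVec_mulVec, Matrix.dotProduct_mulVec,
      Matrix.vecMul_transpose]
    ring
  have hφ0 : φ 0 = 0 := by
    simp [hφ, hγ, hxs]
  have hcont : Continuous φ := by
    rw [continuous_iff_continuousAt]
    exact fun s => (hφd s).differentiableAt.continuousAt
  have hanti : StrictAntiOn φ (Set.Icc (0:ℝ) 1) := by
    apply strictAntiOn_of_deriv_neg (convex_Icc 0 1) hcont.continuousOn
    intro s hs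
    rw [interior_Icc] at hs
    rw [(hφd s).deriv]
    exact hneg _ (hstar _ hxD s ⟨hs.1.le, hs.2.le⟩) v hvne
  have hφ1 : φ 1 < 0 := by
    have := hanti (Set.left_mem_Icc.mpr zero_le_one) (Set.right_mem_Icc.mpr zero_le_one)
      zero_lt_one
    rwa [hφ0] at this
  have hLd : HasDerivAt (fun τ => (x τ - xs) ⬝ᵥ Y.mulVec (x τ - xs))
      (f (x t) ⬝ᵥ Y.mulVec v + v ⬝ᵥ Y.mulVec (f (x t))) t :=
    quad_deriv Y (fun τ => x τ - xs) (fun τ => x τ - xs) (f (x t)) (f (x t)) t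
      ((hx t).sub_const xs) ((hx t).sub_const xs)
  rw [hLd.deriv]
  have hγ1 : γ 1 = x t := by simp [hγ, hv]
  have hfin : v ⬝ᵥ Y *ᵥ f (x t) + f (x t) ⬝ᵥ Y *ᵥ v < 0 := by
    simpa only [hφ, hγ1] using hφ1
  linarith
end

section
/- Under the hypotheses of the previous statement (A(z) = Df(z)^T Y + Y Df(z) negative definite for all z in a star-shaped set D centered at x*, with f(x*) = 0), x* is the unique zero of f in D. -/
open Matrix

/-- If `A(z) = Df(z)ᵀ Y + Y Df(z)` is negative definite on a star-shaped set `D`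
centered at a zero `x*` of `f`, then `x*` is the unique zero of `f` in `D`. -/
theorem stmt5 {n : ℕ} (D : Set (Fin n → ℝ)) (xs : Fin n → ℝ)
    (hstar : ∀ x ∈ D, ∀ s ∈ Set.Icc (0:ℝ) 1, xs + s • (x - xs) ∈ D)
    (f : (Fin n → ℝ) → (Fin n → ℝ))
    (Df : (Fin n → ℝ) → Matrix (Fin n) (Fin n) ℝ)
    (hf : ∀ z, HasFDerivAt f ((Df z).mulVecLin.toContinuousLinearMap) z)
    (hDf : Continuous Df) (hxs : f xs = 0)
    (Y : Matrix (Fin n) (Fin n) ℝ) (hY : Y.IsSymm)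
    (A : (Fin n → ℝ) → Matrix (Fin n) (Fin n) ℝ)
    (hA : ∀ z, A z = (Df z)ᵀ * Y + Y * Df z)
    (hneg : ∀ z ∈ D, ∀ v : Fin n → ℝ, v ≠ 0 → v ⬝ᵥ (A z).mulVec v < 0) :
    ∀ x ∈ D, f x = 0 → x = xs := by
  intro x hx hfx
  by_contra hne
  set v : Fin n → ℝ := x - xs with hv
  have hvne : v ≠ 0 := sub_ne_zero.mpr hne
  -- the linear functional w ↦ v ⬝ Y w
  let L : (Fin n → ℝ) →ₗ[ℝ] ℝ :=
    { toFun := fun w => v ⬝ᵥ Y.mulVec w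
      map_add' := by intro a b; simp [Matrix.mulVec_add, dotProduct_add]
      map_smul' := by intro c a; simp [Matrix.mulVec_smul, dotProduct_smul] }
  set h : ℝ → ℝ := fun s => v ⬝ᵥ Y.mulVec (f (xs + s • v)) with hh
  have hderiv : ∀ s : ℝ,
      HasDerivAt h (v ⬝ᵥ Y.mulVec ((Df (xs + s • v)).mulVec v)) s := by
    intro s
    have hγ : HasDerivAt (fun s : ℝ => xs + s • v) v s := by
      simpa using ((hasDerivAt_id s).smul_const v).const_add xs
    have hfc := (hf (xs + s • v)).comp_hasDerivAt s hγ
    have := (L.toContinuousLinearMap.hasFDerivAt.comp_hasDerivAt s hfc)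
    exact this
  obtain ⟨c, hc, hslope⟩ := exists_hasDerivAt_eq_slope h
      (fun s => v ⬝ᵥ Y.mulVec ((Df (xs + s • v)).mulVec v)) one_pos
      (fun s _ => (hderiv s).continuousAt.continuousWithinAt)
      (fun s _ => hderiv s)
  have h1 : h 1 = 0 := by
    simp [hh, hv, hfx]
  have h0 : h 0 = 0 := by
    simp [hh, hxs]
  rw [h1, h0] at hslope
  simp at hslope
  -- the point along the segment is in D
  set z : Fin n → ℝ := xs + c • v with hz
  have hzD : z ∈ D := hstar x hx c ⟨hc.1.le, hc.2.le⟩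
  have hAv := hneg z hzD v hvne
  have key : v ⬝ᵥ (A z).mulVec v = 2 * (v ⬝ᵥ Y.mulVec ((Df z).mulVec v)) := by
    rw [hA]
    rw [Matrix.add_mulVec, dotProduct_add, ← Matrix.mulVec_mulVec, ← Matrix.mulVec_mulVec]
    rw [Matrix.dotProduct_mulVec v (Df z)ᵀ, Matrix.vecMul_transpose]
    rw [Matrix.dotProduct_mulVec ((Df z).mulVec v) Y, ← Matrix.mulVec_transpose, hY.eq]
    rw [dotProduct_comm]
    ring
  rw [Matrix.mulVec_mulVec] at key
  rw [key, hslope, mul_zero] at hAv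
  exact lt_irrefl 0 hAv
end

section
/- Let Λ = diag(λ₁,…,λₙ) be a complex diagonal matrix with Re(λᵢ) ≠ 0 for all i, X a nonsingular complex n×n matrix, A = X Λ X⁻¹, I* the real diagonal matrix with entries sgn(−Re(λᵢ)), and Ŷ = X^{-H} I* X⁻¹. Then A^H Ŷ + Ŷ A = −2 X^{-H} |Re Λ| X⁻¹, where |Re Λ| = diag(|Re λ₁|,…,|Re λₙ|); in particular A^H Ŷ + Ŷ A is a negative definite Hermitian matrix. -/
open Matrix

lemma aux_key {n : ℕ} (X : Matrix (Fin n) (Fin n) ℂ) (hX : IsUnit X.det)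
    (a b : Fin n → ℂ) :
    (X * Matrix.diagonal a * X⁻¹)ᴴ * ((Xᴴ)⁻¹ * Matrix.diagonal b * X⁻¹)
      + ((Xᴴ)⁻¹ * Matrix.diagonal b * X⁻¹) * (X * Matrix.diagonal a * X⁻¹)
    = (Xᴴ)⁻¹ * Matrix.diagonal (fun i => star (a i) * b i + b i * a i) * X⁻¹ := by
  have hX' : IsUnit (Xᴴ).det := by rw [Matrix.det_conjTranspose]; exact hX.star
  have h1 : Xᴴ * (Xᴴ)⁻¹ = 1 := Matrix.mul_nonsing_inv _ hX'
  have h2 : X⁻¹ * X = 1 := Matrix.nonsing_inv_mul _ hX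
  have hct : (X * Matrix.diagonal a * X⁻¹)ᴴ
      = (Xᴴ)⁻¹ * (Matrix.diagonal (star a) * Xᴴ) := by
    simp [Matrix.conjTranspose_mul, Matrix.conjTranspose_nonsing_inv,
      Matrix.diagonal_conjTranspose, Matrix.mul_assoc]
  rw [hct]
  simp only [Matrix.mul_assoc]
  rw [Matrix.mul_nonsing_inv_cancel_left _ _ hX', Matrix.nonsing_inv_mul_cancel_left _ _ hX,
    ← Matrix.mul_add]
  congr 1
  rw [← Matrix.mul_assoc, ← Matrix.mul_assoc, Matrix.diagonal_mul_diagonal,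
    Matrix.diagonal_mul_diagonal, ← Matrix.add_mul, ← Matrix.diagonal_add]
  rfl

/-- For `A = X Λ X⁻¹` with `Λ` diagonal, `Re λᵢ ≠ 0`, `I* = diag(sgn(−Re λᵢ))`
and `Ŷ = X^{-H} I* X⁻¹`, we have `Aᴴ Ŷ + Ŷ A = −2 X^{-H} |Re Λ| X⁻¹`, a
negative definite Hermitian matrix. -/
theorem stmt6 {n : ℕ} (l : Fin n → ℂ) (hl : ∀ i, (l i).re ≠ 0)
    (X : Matrix (Fin n) (Fin n) ℂ) (hX : IsUnit X.det)
    (A Istar Yhat : Matrix (Fin n) (Fin n) ℂ)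
    (hA : A = X * Matrix.diagonal l * X⁻¹)
    (hI : Istar = Matrix.diagonal (fun i => if (l i).re < 0 then (1:ℂ) else -1))
    (hY : Yhat = (Xᴴ)⁻¹ * Istar * X⁻¹) :
    Aᴴ * Yhat + Yhat * A
      = (-2 : ℂ) • ((Xᴴ)⁻¹ * Matrix.diagonal (fun i => ((|(l i).re| : ℝ) : ℂ)) * X⁻¹)
    ∧ (Aᴴ * Yhat + Yhat * A).IsHermitian
    ∧ ∀ z : Fin n → ℂ, z ≠ 0 →
        (star z ⬝ᵥ (Aᴴ * Yhat + Yhat * A).mulVec z).re < 0 := by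
  set s : Fin n → ℂ := fun i => if (l i).re < 0 then (1:ℂ) else -1 with hs
  set f : Fin n → ℂ := fun i => (-2 : ℂ) * ((|(l i).re| : ℝ) : ℂ) with hf
  have hentry : (fun i => star (l i) * s i + s i * l i) = f := by
    funext i
    simp only [hs, hf]
    by_cases h : (l i).re < 0
    · rw [if_pos h, abs_of_neg h, mul_one, one_mul, Complex.ext_iff]
      constructor <;> simp <;> ring
    · rw [if_neg h, mul_neg_one, neg_one_mul,
        abs_of_pos (lt_of_le_of_ne (not_lt.mp h) (Ne.symm (hl i))), Complex.ext_iff]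
      constructor <;> simp <;> ring
  have key : Aᴴ * Yhat + Yhat * A = (Xᴴ)⁻¹ * Matrix.diagonal f * X⁻¹ := by
    rw [hA, hY, hI, aux_key X hX l s, hentry]
  have hfg : f = (-2 : ℂ) • (fun i => ((|(l i).re| : ℝ) : ℂ)) := by
    funext i; simp [hf]
  have keyrw : (Xᴴ)⁻¹ * Matrix.diagonal f * X⁻¹
      = (-2 : ℂ) • ((Xᴴ)⁻¹ * Matrix.diagonal (fun i => ((|(l i).re| : ℝ) : ℂ)) * X⁻¹) := by
    rw [hfg, Matrix.diagonal_smul, mul_smul_comm, smul_mul_assoc]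
  have hstar : star f = f := by
    funext i
    simp [hf, Pi.star_apply, Complex.ext_iff]
  have hDherm : (Matrix.diagonal f).IsHermitian := by
    rw [Matrix.IsHermitian, Matrix.diagonal_conjTranspose, hstar]
  refine ⟨key.trans keyrw, ?_, ?_⟩
  · rw [key, ← Matrix.conjTranspose_nonsing_inv]
    exact Matrix.isHermitian_conjTranspose_mul_mul _ hDherm
  · intro z hz
    rw [key, ← Matrix.conjTranspose_nonsing_inv]
    set w : Fin n → ℂ := X⁻¹ *ᵥ z with hw
    have hw0 : w ≠ 0 := by
      intro h
      apply hz
      have : X *ᵥ w = X *ᵥ 0 := by rw [h]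
      rw [hw, Matrix.mulVec_mulVec, Matrix.mul_nonsing_inv _ hX, Matrix.one_mulVec,
        Matrix.mulVec_zero] at this
      exact this
    have hdot : star z ⬝ᵥ ((X⁻¹)ᴴ * Matrix.diagonal f * X⁻¹) *ᵥ z
        = star w ⬝ᵥ Matrix.diagonal f *ᵥ w := by
      rw [← Matrix.mulVec_mulVec, ← Matrix.mulVec_mulVec, Matrix.dotProduct_mulVec,
        ← Matrix.star_mulVec, ← hw, Matrix.dotProduct_mulVec, ← Matrix.dotProduct_mulVec]
    rw [hdot]
    have hsum : (star w ⬝ᵥ Matrix.diagonal f *ᵥ w).re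
        = ∑ i, (-2 * |(l i).re|) * Complex.normSq (w i) := by
      simp only [dotProduct, Matrix.mulVec_diagonal, Pi.star_apply, hf]
      rw [Complex.re_sum]
      congr 1
      funext i
      have h1 : star (w i) * ((-2 : ℂ) * ((|(l i).re| : ℝ) : ℂ) * w i)
          = (((-2 * |(l i).re| : ℝ)) : ℂ) * (star (w i) * w i) := by push_cast; ring
      have h2 : star (w i) * w i = ((Complex.normSq (w i) : ℝ) : ℂ) := by
        rw [Complex.star_def, mul_comm, Complex.mul_conj]
      rw [h1, h2, ← Complex.ofReal_mul, Complex.ofReal_re]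
    rw [hsum]
    obtain ⟨j, hj⟩ : ∃ j, w j ≠ 0 := Function.ne_iff.mp hw0
    have hle : ∀ i ∈ Finset.univ, (-2 * |(l i).re|) * Complex.normSq (w i) ≤ 0 := by
      intro i _
      apply mul_nonpos_of_nonpos_of_nonneg
      · nlinarith [abs_nonneg (l i).re]
      · exact Complex.normSq_nonneg _
    calc ∑ i, (-2 * |(l i).re|) * Complex.normSq (w i)
        < ∑ _i : Fin n, (0:ℝ) := by
          apply Finset.sum_lt_sum hle
          refine ⟨j, Finset.mem_univ j, ?_⟩
          apply mul_neg_of_neg_of_pos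
          · have := abs_pos.mpr (hl j); nlinarith
          · exact Complex.normSq_pos.mpr hj
      _ = 0 := by simp
end

section
/- Let Λ = diag(λ₁,…,λₙ) be a complex diagonal matrix with |λᵢ| ≠ 1 for all i, X a nonsingular complex n×n matrix, A = X Λ X⁻¹, I* the real diagonal matrix with iₖ = 1 if |λₖ| < 1 and iₖ = −1 if |λₖ| > 1, and Ŷ = X^{-H} I* X⁻¹. Then A^H Ŷ A − Ŷ = X^{-H} (|Λ|² − I) I* X⁻¹, where |Λ|² = diag(|λ₁|²,…,|λₙ|²); in particular A^H Ŷ A − Ŷ is a negative definite Hermitian matrix. -/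
open Matrix

/-- For `A = X Λ X⁻¹` with `Λ` diagonal, `|λᵢ| ≠ 1`, `I* = diag(±1)` according
to `|λᵢ| < 1` or `|λᵢ| > 1`, and `Ŷ = X^{-H} I* X⁻¹`, we have
`Aᴴ Ŷ A − Ŷ = X^{-H} (|Λ|² − I) I* X⁻¹`, a negative definite Hermitian matrix. -/
theorem stmt7 {n : ℕ} (l : Fin n → ℂ) (hl : ∀ i, ‖l i‖ ≠ 1)
    (X : Matrix (Fin n) (Fin n) ℂ) (hX : IsUnit X.det)
    (A Istar Yhat : Matrix (Fin n) (Fin n) ℂ)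
    (hA : A = X * Matrix.diagonal l * X⁻¹)
    (hI : Istar = Matrix.diagonal (fun i => if ‖l i‖ < 1 then (1:ℂ) else -1))
    (hY : Yhat = (Xᴴ)⁻¹ * Istar * X⁻¹) :
    Aᴴ * Yhat * A - Yhat
      = (Xᴴ)⁻¹ * ((Matrix.diagonal (fun i => ((‖l i‖)^2 : ℂ)) - 1) * Istar) * X⁻¹
    ∧ (Aᴴ * Yhat * A - Yhat).IsHermitian
    ∧ ∀ z : Fin n → ℂ, z ≠ 0 →
        (star z ⬝ᵥ (Aᴴ * Yhat * A - Yhat).mulVec z).re < 0 := by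
  have hXH : IsUnit (Xᴴ).det := by
    rw [det_conjTranspose]; exact hX.star
  set s : Fin n → ℂ := fun i => if ‖l i‖ < 1 then (1:ℂ) else -1 with hs
  set d : Fin n → ℂ := fun i => (((‖l i‖)^2 : ℂ) - 1) * s i with hd
  -- the key diagonal entry computation
  have hentry : ∀ i, star (l i) * s i * l i - s i = d i := by
    intro i
    have h1 : star (l i) * l i = ((‖l i‖)^2 : ℂ) := by
      rw [Complex.star_def, mul_comm, Complex.mul_conj]
      norm_cast
      exact (Complex.sq_norm _).symm
    calc star (l i) * s i * l i - s i = star (l i) * l i * s i - s i := by ring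
      _ = ((‖l i‖)^2 : ℂ) * s i - s i := by rw [h1]
      _ = d i := by simp [hd]; ring
  have hdiag : (Matrix.diagonal l)ᴴ * Istar * Matrix.diagonal l - Istar
      = Matrix.diagonal d := by
    rw [hI, diagonal_conjTranspose, diagonal_mul_diagonal, diagonal_mul_diagonal]
    ext i j
    rcases eq_or_ne i j with rfl | hij
    · simp [← hentry i]
    · simp [Matrix.diagonal_apply_ne _ hij]
  have hRHS : (Matrix.diagonal (fun i => ((‖l i‖)^2 : ℂ)) - 1) * Istar
      = Matrix.diagonal d := by
    rw [hI, ← diagonal_one]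
    ext i j
    rcases eq_or_ne i j with rfl | hij
    · simp [hd, Matrix.sub_mul, Matrix.mul_apply, Matrix.diagonal_apply, Finset.sum_ite_eq]
    · simp [Matrix.sub_mul, Matrix.mul_apply, Matrix.diagonal_apply, hij,
        Matrix.diagonal_apply_ne _ hij]
  -- main equality
  have hmain : Aᴴ * Yhat * A - Yhat = (Xᴴ)⁻¹ * Matrix.diagonal d * X⁻¹ := by
    subst hA hY
    rw [conjTranspose_mul, conjTranspose_mul, conjTranspose_nonsing_inv]
    have : (Xᴴ)⁻¹ * ((Matrix.diagonal l)ᴴ * Xᴴ) * ((Xᴴ)⁻¹ * Istar * X⁻¹) *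
        (X * Matrix.diagonal l * X⁻¹)
        = (Xᴴ)⁻¹ * ((Matrix.diagonal l)ᴴ * (Xᴴ * ((Xᴴ)⁻¹ * (Istar * (X⁻¹ *
            (X * (Matrix.diagonal l * X⁻¹))))))) := by
      noncomm_ring
    rw [this, Matrix.mul_nonsing_inv_cancel_left _ _ hXH,
      Matrix.nonsing_inv_mul_cancel_left _ _ hX]
    have h2 : (Xᴴ)⁻¹ * ((Matrix.diagonal l)ᴴ * (Istar * (Matrix.diagonal l * X⁻¹)))
        - (Xᴴ)⁻¹ * Istar * X⁻¹
        = (Xᴴ)⁻¹ * ((Matrix.diagonal l)ᴴ * Istar * Matrix.diagonal l - Istar) * X⁻¹ := by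
      noncomm_ring
    rw [h2, hdiag]
  have hdre : ∀ i, (d i).re < 0 := by
    intro i
    have hre : d i = Complex.ofReal ((‖l i‖)^2 - 1) * s i := by
      rw [hd]; push_cast; ring
    by_cases h : ‖l i‖ < 1
    · have h2 : (‖l i‖)^2 < 1 := by nlinarith [norm_nonneg (l i)]
      rw [hre]
      simp only [hs]
      rw [if_pos h, mul_one, Complex.ofReal_re]
      linarith
    · have h' : 1 < ‖l i‖ := lt_of_le_of_ne (not_lt.mp h) (Ne.symm (hl i))
      have h2 : 1 < (‖l i‖)^2 := by nlinarith
      rw [hre]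
      simp only [hs]
      rw [if_neg h, mul_neg_one, Complex.neg_re, Complex.ofReal_re]
      linarith
  have hdim : ∀ i, (d i).im = 0 := by
    intro i
    have hre : d i = Complex.ofReal ((‖l i‖)^2 - 1) * s i := by
      rw [hd]; push_cast; ring
    rw [hre]
    simp only [hs]
    by_cases h : ‖l i‖ < 1
    · rw [if_pos h, mul_one, Complex.ofReal_im]
    · rw [if_neg h, mul_neg_one, Complex.neg_im, Complex.ofReal_im, neg_zero]
  refine ⟨by rw [hmain, hRHS], ?_, ?_⟩
  · rw [hmain, ← conjTranspose_nonsing_inv]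
    have hherm : (Matrix.diagonal d).IsHermitian := by
      rw [Matrix.IsHermitian, diagonal_conjTranspose]
      have hsd : star d = d := funext fun i => Complex.conj_eq_iff_im.mpr (hdim i)
      rw [hsd]
    exact Matrix.isHermitian_conjTranspose_mul_mul _ hherm
  · intro z hz
    rw [hmain]
    set w : Fin n → ℂ := X⁻¹.mulVec z with hw
    have hwne : w ≠ 0 := by
      intro h0
      apply hz
      have : X.mulVec w = X.mulVec 0 := by rw [h0]
      rw [hw, Matrix.mulVec_mulVec, Matrix.mul_nonsing_inv _ hX, Matrix.one_mulVec,
        Matrix.mulVec_zero] at this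
      exact this
    have hdot : star z ⬝ᵥ ((Xᴴ)⁻¹ * Matrix.diagonal d * X⁻¹).mulVec z
        = star w ⬝ᵥ (Matrix.diagonal d).mulVec w := by
      rw [← Matrix.mulVec_mulVec, ← Matrix.mulVec_mulVec, Matrix.dotProduct_mulVec,
        ← conjTranspose_nonsing_inv, ← Matrix.star_mulVec, hw, Matrix.dotProduct_mulVec]
    rw [hdot]
    have hsum : star w ⬝ᵥ (Matrix.diagonal d).mulVec w
        = ∑ i, d i * (Complex.normSq (w i) : ℂ) := by
      rw [dotProduct]
      congr 1
      funext i
      rw [Matrix.mulVec_diagonal]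
      simp [Pi.star_apply, Complex.star_def, Complex.normSq_eq_conj_mul_self]
      ring
    rw [hsum]
    rw [Complex.re_sum]
    have hterm : ∀ i, (d i * (Complex.normSq (w i) : ℂ)).re = (d i).re * Complex.normSq (w i) := by
      intro i
      simp [Complex.mul_re]
    simp_rw [hterm]
    have hex : ∃ i, w i ≠ 0 := by
      by_contra h
      push_neg at h
      exact hwne (funext h)
    obtain ⟨j, hj⟩ := hex
    have : ∀ i ∈ Finset.univ, (d i).re * Complex.normSq (w i) ≤ 0 := by
      intro i _
      exact mul_nonpos_of_nonpos_of_nonneg (hdre i).le (Complex.normSq_nonneg _)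
    have hj' : (d j).re * Complex.normSq (w j) < 0 :=
      mul_neg_of_neg_of_pos (hdre j) (Complex.normSq_pos.mpr hj)
    have hlt := Finset.sum_lt_sum (f := fun i => (d i).re * Complex.normSq (w i))
      (g := fun _ => (0:ℝ)) (fun i hi => this i hi) ⟨j, Finset.mem_univ j, hj'⟩
    simpa using hlt
end

section
/- Under the hypotheses of the previous statement (B(x) = A_I(x)^T Y A_I(x) − Y negative definite for all x in a star-shaped set D centered at fixed point x* of ψ), x* is the unique fixed point of ψ in D. -/
open Matrix

/-- If `B(x) = A_I(x)ᵀ Y A_I(x) − Y` is negative definite on a star-shaped set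
`D` centered at a fixed point `x*` of `ψ`, then `x*` is the unique fixed point
of `ψ` in `D`. -/
theorem stmt10 {n : ℕ} (D : Set (Fin n → ℝ)) (xs : Fin n → ℝ)
    (hstar : ∀ x ∈ D, ∀ s ∈ Set.Icc (0:ℝ) 1, xs + s • (x - xs) ∈ D)
    (ψ : (Fin n → ℝ) → (Fin n → ℝ))
    (Dψ : (Fin n → ℝ) → Matrix (Fin n) (Fin n) ℝ)
    (hψ : ∀ z, HasFDerivAt ψ ((Dψ z).mulVecLin.toContinuousLinearMap) z)
    (hDψ : Continuous Dψ) (hxs : ψ xs = xs)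
    (Y : Matrix (Fin n) (Fin n) ℝ) (hY : Y.IsSymm)
    (AI B : (Fin n → ℝ) → Matrix (Fin n) (Fin n) ℝ)
    (hAI : ∀ x, AI x = Matrix.of fun i j =>
      ∫ s in (0:ℝ)..1, Dψ (xs + s • (x - xs)) i j)
    (hB : ∀ x, B x = (AI x)ᵀ * Y * AI x - Y)
    (hneg : ∀ x ∈ D, ∀ v : Fin n → ℝ, v ≠ 0 → v ⬝ᵥ (B x).mulVec v < 0) :
    ∀ x ∈ D, ψ x = x → x = xs := by
  intro x hxD hfix
  by_contra hne
  set v : Fin n → ℝ := x - xs with hv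
  have hvne : v ≠ 0 := sub_ne_zero.mpr hne
  set γ : ℝ → (Fin n → ℝ) := fun s => xs + s • v with hγ
  -- γ has derivative v
  have hγd : ∀ s : ℝ, HasDerivAt γ v s := by
    intro s
    simpa [hγ] using ((hasDerivAt_id s).smul_const v).const_add xs
  -- derivative of ψ ∘ γ
  have hcomp : ∀ s : ℝ, HasDerivAt (fun t => ψ (γ t)) ((Dψ (γ s)) *ᵥ v) s := by
    intro s
    have := (hψ (γ s)).comp_hasDerivAt s (hγd s)
    exact this
  -- continuity of integrand
  have hcont : Continuous (fun s => (Dψ (γ s)) *ᵥ v) := by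
    have hγc : Continuous γ := by fun_prop
    exact ((continuous_pi fun i => continuous_pi fun j =>
      ((continuous_apply j).comp ((continuous_apply i).comp (hDψ.comp hγc)))).matrix_mulVec
        continuous_const)
  -- key: AI x *ᵥ v = v
  have hkey : AI x *ᵥ v = v := by
    funext i
    have hci : Continuous (fun s => ((Dψ (γ s)) *ᵥ v) i) := (continuous_apply i).comp hcont
    have hftc : ∫ s in (0:ℝ)..1, ((Dψ (γ s)) *ᵥ v) i
        = ψ (γ 1) i - ψ (γ 0) i := by
      have := intervalIntegral.integral_eq_sub_of_hasDerivAt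
        (f := fun t => ψ (γ t) i) (f' := fun s => ((Dψ (γ s)) *ᵥ v) i) (a := (0:ℝ)) (b := 1)
        (fun s _ => by
          have hL := (ContinuousLinearMap.proj (R := ℝ) (φ := fun _ : Fin n => ℝ) i
            ).hasFDerivAt.comp_hasDerivAt s (hcomp s)
          exact hL)
        (hci.intervalIntegrable 0 1)
      simpa using this
    have hγ1 : γ 1 = x := by simp [hγ, hv]
    have hγ0 : γ 0 = xs := by simp [hγ]
    rw [hγ1, hγ0, hfix, hxs] at hftc
    have hAIi : (AI x *ᵥ v) i = ∫ s in (0:ℝ)..1, ((Dψ (γ s)) *ᵥ v) i := by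
      rw [hAI]
      simp only [Matrix.mulVec, dotProduct, Matrix.of_apply]
      simp_rw [← intervalIntegral.integral_mul_const]
      rw [← intervalIntegral.integral_finset_sum]
      intro j _
      exact (((continuous_apply j).comp ((continuous_apply i).comp
          (hDψ.comp (by fun_prop : Continuous γ)))).mul continuous_const).intervalIntegrable 0 1
    rw [hAIi, hftc]
    simp [hv]
  -- now derive contradiction
  have h0 : v ⬝ᵥ (B x) *ᵥ v = 0 := by
    rw [hB]
    rw [Matrix.sub_mulVec, dotProduct_sub]
    rw [← Matrix.mulVec_mulVec, ← Matrix.mulVec_mulVec, hkey]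
    rw [Matrix.dotProduct_mulVec, Matrix.vecMul_transpose, hkey]
    exact sub_self _
  have := hneg x hxD v hvne
  rw [h0] at this
  exact lt_irrefl 0 this
end

section
/- Let A be a real n×n matrix, Λ = diag(λ₁,…,λₙ) a complex diagonal matrix with Re(λᵢ) ≠ 0 for all i, write A = Λ + V, and let I* = diag(sgn(−Re λ₁),…,sgn(−Re λₙ)). If |Re(λᵢ)| > Σⱼ |V_{ij}| and |Re(λᵢ)| > Σⱼ |V_{ji}| for all i, then the Hermitian matrix A^H I* + I* A is negative definite. -/
open Matrix

/-- Let `A` be a real matrix (viewed over `ℂ`), `A = Λ + V` with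
`Λ = diag(λᵢ)`, `Re λᵢ ≠ 0`, and `I* = diag(sgn(−Re λᵢ))`. If the row and
column sums of `|V|` are strictly dominated by `|Re λᵢ|`, then the Hermitian
matrix `Aᴴ I* + I* A` is negative definite. -/
theorem stmt16 {n : ℕ} (A : Matrix (Fin n) (Fin n) ℂ)
    (hAreal : ∀ i j, (A i j).im = 0)
    (l : Fin n → ℂ) (hl : ∀ i, (l i).re ≠ 0)
    (V Istar : Matrix (Fin n) (Fin n) ℂ)
    (hV : V = A - Matrix.diagonal l)
    (hI : Istar = Matrix.diagonal (fun i => if (l i).re < 0 then (1:ℂ) else -1))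
    (hrow : ∀ i, ∑ j, ‖V i j‖ < |(l i).re|)
    (hcol : ∀ i, ∑ j, ‖V j i‖ < |(l i).re|) :
    (Aᴴ * Istar + Istar * A).IsHermitian
    ∧ ∀ z : Fin n → ℂ, z ≠ 0 →
        (star z ⬝ᵥ (Aᴴ * Istar + Istar * A).mulVec z).re < 0 := by
  -- notation
  set M : Matrix (Fin n) (Fin n) ℂ := Aᴴ * Istar + Istar * A with hM
  have hIH : Istarᴴ = Istar := by
    subst hI
    rw [Matrix.diagonal_conjTranspose]
    have hstar : (star fun i => if (l i).re < 0 then (1:ℂ) else -1)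
        = fun i => if (l i).re < 0 then (1:ℂ) else -1 := by
      funext i
      by_cases h : (l i).re < 0 <;> simp [h]
    rw [hstar]
  have hHerm : M.IsHermitian := by
    unfold Matrix.IsHermitian
    rw [hM, Matrix.conjTranspose_add, Matrix.conjTranspose_mul, Matrix.conjTranspose_mul,
      Matrix.conjTranspose_conjTranspose, hIH]
    exact add_comm _ _
  refine ⟨hHerm, ?_⟩
  intro z hz
  -- real quantities
  set r : Fin n → ℝ := fun i => (l i).re with hr
  set ι : Fin n → ℝ := fun i => if r i < 0 then 1 else -1 with hiota
  set e : Fin n → ℂ := fun i => if r i < 0 then (1:ℂ) else -1 with he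
  have hec : ∀ i, e i = ((ι i : ℝ) : ℂ) := by
    intro i; by_cases h : r i < 0 <;> simp [he, hiota, h]
  set a : Fin n → Fin n → ℝ := fun i j => ‖V i j‖ with ha
  set x : Fin n → ℝ := fun i => Complex.normSq (z i) with hx
  have hxnn : ∀ i, 0 ≤ x i := fun i => Complex.normSq_nonneg _
  have hann : ∀ i j, 0 ≤ a i j := fun i j => norm_nonneg _
  have hAre : ∀ i j, star (A i j) = A i j := by
    intro i j
    exact Complex.conj_eq_iff_im.mpr (hAreal i j)
  -- entries of M
  have hMij : ∀ i j, M i j = A j i * e j + e i * A i j := by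
    intro i j
    rw [hM, Matrix.add_apply, hI, Matrix.mul_diagonal, Matrix.diagonal_mul,
      Matrix.conjTranspose_apply, hAre]
  -- off diagonal entries of A are entries of V
  have hAV : ∀ i j, i ≠ j → A i j = V i j := by
    intro i j hij
    rw [hV, Matrix.sub_apply, Matrix.diagonal_apply_ne _ hij, sub_zero]
  have hiota_r : ∀ i, ι i * r i = -|r i| := by
    intro i
    by_cases h : r i < 0
    · simp [hiota, h, abs_of_neg h]
    · have h' : 0 < r i := lt_of_le_of_ne (not_lt.mp h) (Ne.symm (hl i))
      simp [hiota, h, abs_of_pos h']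
  have hiotaabs : ∀ i, |ι i| = 1 := by
    intro i; by_cases h : r i < 0 <;> simp [hiota, h]
  -- the key per-pair bound
  have key : ∀ i j, (star (z i) * (M i j * z j)).re ≤
      (x i + x j) / 2 * (a i j + a j i) + (if i = j then -2 * |r i| * x i else 0) := by
    intro i j
    by_cases hij : i = j
    · subst hij
      rw [if_pos rfl]
      have hA : A i i = ((A i i).re : ℂ) := by
        apply Complex.ext
        · simp
        · simp [hAreal i i]
      have hzz : star (z i) * z i = ((x i : ℝ) : ℂ) := by
        rw [mul_comm, hx]
        exact Complex.mul_conj (z i)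
      set c : ℝ := (A i i).re with hcdef
      have hterm : star (z i) * (M i i * z i) = ((2 * ι i * c * x i : ℝ) : ℂ) := by
        rw [hMij i i, hec, hA]
        calc star (z i) * (((c : ℂ) * ((ι i : ℝ) : ℂ) + ((ι i : ℝ) : ℂ) * (c : ℂ)) * z i)
            = ((c : ℂ) * ((ι i : ℝ) : ℂ) + ((ι i : ℝ) : ℂ) * (c : ℂ))
              * (star (z i) * z i) := by ring
          _ = ((2 * ι i * c * x i : ℝ) : ℂ) := by
              rw [hzz]; push_cast; ring
      rw [hterm, Complex.ofReal_re]
      -- (A i i).re = r i + (V i i).re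
      have hVii : (V i i).re = (A i i).re - r i := by
        rw [hV]; simp [Matrix.sub_apply, Matrix.diagonal_apply_eq, hr]
      have h1 : ι i * (V i i).re ≤ a i i := by
        calc ι i * (V i i).re ≤ |ι i * (V i i).re| := le_abs_self _
          _ = |(V i i).re| := by rw [abs_mul, hiotaabs, one_mul]
          _ ≤ a i i := Complex.abs_re_le_norm _
      have h2 : 2 * ι i * (A i i).re = -2 * |r i| + 2 * (ι i * (V i i).re) := by
        have : (A i i).re = r i + (V i i).re := by rw [hVii]; ring
        rw [this]
        have := hiota_r i
        nlinarith [hiota_r i]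
      rw [h2]
      have hxi := hxnn i
      nlinarith [h1]
    · rw [if_neg hij, add_zero]
      calc (star (z i) * (M i j * z j)).re
          ≤ ‖star (z i) * (M i j * z j)‖ := Complex.re_le_norm _
        _ = ‖z i‖ * ‖M i j‖ * ‖z j‖ := by
            have hstarabs : ‖star (z i)‖ = ‖z i‖ := by
              exact norm_star (z i)
            rw [norm_mul, norm_mul, hstarabs]; ring
        _ ≤ ‖z i‖ * (a j i + a i j) * ‖z j‖ := by
            apply mul_le_mul_of_nonneg_right _ (norm_nonneg _)
            apply mul_le_mul_of_nonneg_left _ (norm_nonneg _)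
            rw [hMij i j, hAV j i (Ne.symm hij), hAV i j hij]
            calc ‖V j i * e j + e i * V i j‖
                ≤ ‖V j i * e j‖ + ‖e i * V i j‖ :=
                  norm_add_le _ _
              _ = a j i + a i j := by
                  have h1 : ‖e j‖ = 1 := by
                    by_cases h : r j < 0 <;> simp [he, h]
                  have h2 : ‖e i‖ = 1 := by
                    by_cases h : r i < 0 <;> simp [he, h]
                  rw [norm_mul, norm_mul, h1, h2]
                  simp only [ha]
                  ring
        _ ≤ (x i + x j) / 2 * (a i j + a j i) := by
            have h1 : ‖z i‖ * ‖z j‖ ≤ (x i + x j) / 2 := by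
              have := two_mul_le_add_sq (‖z i‖) (‖z j‖)
              have e1 : ‖z i‖ ^ 2 = x i := Complex.sq_norm _
              have e2 : ‖z j‖ ^ 2 = x j := Complex.sq_norm _
              nlinarith
            have h2 : 0 ≤ a i j + a j i := add_nonneg (hann i j) (hann j i)
            nlinarith [norm_nonneg (z i), norm_nonneg (z j)]
  -- expand the quadratic form
  have hexp : (star z ⬝ᵥ M.mulVec z).re = ∑ i, ∑ j, (star (z i) * (M i j * z j)).re := by
    rw [dotProduct, Complex.re_sum]
    apply Finset.sum_congr rfl
    intro i _
    rw [Matrix.mulVec, dotProduct, Pi.star_apply, Finset.mul_sum, Complex.re_sum]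
  rw [hexp]
  -- bound by the sum of per-pair bounds
  have hbound : ∑ i, ∑ j, (star (z i) * (M i j * z j)).re ≤
      ∑ i, ∑ j, ((x i + x j) / 2 * (a i j + a j i)
        + (if i = j then -2 * |r i| * x i else 0)) := by
    apply Finset.sum_le_sum
    intro i _
    apply Finset.sum_le_sum
    intro j _
    exact key i j
  refine lt_of_le_of_lt hbound ?_
  -- rearrange the bound
  have swap : ∑ i, ∑ j, x j * (a i j + a j i) / 2
      = ∑ i, ∑ j, x i * (a i j + a j i) / 2 := by
    rw [Finset.sum_comm]
    apply Finset.sum_congr rfl; intro i _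
    apply Finset.sum_congr rfl; intro j _
    ring
  have e2 : ∑ i, ∑ j, (x i + x j) / 2 * (a i j + a j i)
      = ∑ i, ∑ j, x i * (a i j + a j i) := by
    have expand : ∀ i : Fin n, ∑ j, (x i + x j) / 2 * (a i j + a j i)
        = (∑ j, x i * (a i j + a j i) / 2) + ∑ j, x j * (a i j + a j i) / 2 := by
      intro i
      rw [← Finset.sum_add_distrib]
      apply Finset.sum_congr rfl; intro j _
      ring
    simp only [expand]
    rw [Finset.sum_add_distrib, swap, ← Finset.sum_add_distrib]
    apply Finset.sum_congr rfl; intro i _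
    rw [← Finset.sum_add_distrib]
    apply Finset.sum_congr rfl; intro j _
    ring
  have hsplit : ∑ i, ∑ j, ((x i + x j) / 2 * (a i j + a j i)
        + (if i = j then -2 * |r i| * x i else 0))
      = ∑ i, x i * ((∑ j, a i j) + (∑ j, a j i) - 2 * |r i|) := by
    have e1 : ∀ i : Fin n, ∑ j, ((x i + x j) / 2 * (a i j + a j i)
          + (if i = j then -2 * |r i| * x i else 0))
        = (∑ j, (x i + x j) / 2 * (a i j + a j i)) + (-2 * |r i| * x i) := by
      intro i
      rw [Finset.sum_add_distrib]
      congr 1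
      simp
    simp only [e1]
    rw [Finset.sum_add_distrib, e2, ← Finset.sum_add_distrib]
    apply Finset.sum_congr rfl; intro i _
    rw [← Finset.mul_sum, Finset.sum_add_distrib]
    ring
  rw [hsplit]
  obtain ⟨k, hk⟩ := Function.ne_iff.mp hz
  have hxk : 0 < x k := Complex.normSq_pos.mpr hk
  have hc : ∀ i, (∑ j, a i j) + (∑ j, a j i) - 2 * |r i| < 0 := by
    intro i
    have h1 := hrow i
    have h2 := hcol i
    simp only [ha, hr]
    linarith
  have hfin : ∑ i, x i * ((∑ j, a i j) + (∑ j, a j i) - 2 * |r i|)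
      < ∑ _i : Fin n, (0:ℝ) := by
    apply Finset.sum_lt_sum
    · intro i _
      exact mul_nonpos_of_nonneg_of_nonpos (hxnn i) (le_of_lt (hc i))
    · exact ⟨k, Finset.mem_univ k, by simpa using mul_neg_of_pos_of_neg hxk (hc k)⟩
  simpa using hfin
end

section
/- Let f : ℝ^n → ℝ^n be C¹ with f(x*) = 0 and Y real symmetric. Suppose the matrix A(z) = Df(z)^T Y + Y Df(z) is negative definite at z = x*. Then there exists ε > 0 such that for all x with 0 < ‖x − x*‖ < ε, the quantity f(x)^T Y (x − x*) + (x − x*)^T Y f(x) is strictly negative. -/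
open Matrix

private theorem stmt19_coercive {n : ℕ} (A : Matrix (Fin n) (Fin n) ℝ)
    (hneg : ∀ v : Fin n → ℝ, v ≠ 0 → v ⬝ᵥ A.mulVec v < 0) :
    ∃ c > (0:ℝ), ∀ v : Fin n → ℝ, v ≠ 0 → v ⬝ᵥ A.mulVec v ≤ -c * ‖v‖^2 := by
  have hcont : Continuous fun v : Fin n → ℝ => v ⬝ᵥ A.mulVec v := by
    simp only [dotProduct, Matrix.mulVec]
    fun_prop
  have hhomog : ∀ (a : ℝ) (u : Fin n → ℝ),
      (a • u) ⬝ᵥ A.mulVec (a • u) = a^2 * (u ⬝ᵥ A.mulVec u) := by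
    intro a u
    rw [Matrix.mulVec_smul, smul_dotProduct, dotProduct_smul]
    simp [smul_eq_mul]
    ring
  by_cases hS : (Metric.sphere (0 : Fin n → ℝ) 1).Nonempty
  · obtain ⟨u₀, hu₀, hmax⟩ := (isCompact_sphere (0 : Fin n → ℝ) 1).exists_isMaxOn hS
      hcont.continuousOn
    set m := u₀ ⬝ᵥ A.mulVec u₀ with hm
    have hu₀ne : u₀ ≠ 0 := by
      intro h
      rw [h] at hu₀
      simp at hu₀
    have hmneg : m < 0 := hneg u₀ hu₀ne
    refine ⟨-m, by linarith, fun v hv => ?_⟩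
    have hnv : ‖v‖ ≠ 0 := norm_ne_zero_iff.mpr hv
    have hmem : (‖v‖⁻¹ • v) ∈ Metric.sphere (0 : Fin n → ℝ) 1 := by
      simp [norm_smul, abs_of_nonneg (norm_nonneg v), inv_mul_cancel₀ hnv]
    have hle := hmax hmem
    have hrw : v = ‖v‖ • (‖v‖⁻¹ • v) := by
      rw [smul_smul, mul_inv_cancel₀ hnv, one_smul]
    calc v ⬝ᵥ A.mulVec v = ‖v‖^2 * ((‖v‖⁻¹ • v) ⬝ᵥ A.mulVec (‖v‖⁻¹ • v)) := by
          conv_lhs => rw [hrw]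
          exact hhomog _ _
      _ ≤ ‖v‖^2 * m := mul_le_mul_of_nonneg_left hle (by positivity)
      _ = -(-m) * ‖v‖^2 := by ring
  · refine ⟨1, one_pos, fun v hv => ?_⟩
    exfalso
    apply hS
    have hnv : ‖v‖ ≠ 0 := norm_ne_zero_iff.mpr hv
    exact ⟨‖v‖⁻¹ • v, by simp [norm_smul, abs_of_nonneg (norm_nonneg v), inv_mul_cancel₀ hnv]⟩

private theorem stmt19_dot_bound {n : ℕ} (a w : Fin n → ℝ) :
    |a ⬝ᵥ w| ≤ n * ‖a‖ * ‖w‖ := by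
  calc |a ⬝ᵥ w| ≤ ∑ i, |a i * w i| := Finset.abs_sum_le_sum_abs _ _
    _ ≤ ∑ _i : Fin n, ‖a‖ * ‖w‖ := by
        apply Finset.sum_le_sum
        intro i _
        rw [abs_mul]
        exact mul_le_mul (norm_le_pi_norm a i) (norm_le_pi_norm w i)
          (abs_nonneg _) (norm_nonneg _)
    _ = n * ‖a‖ * ‖w‖ := by simp [Finset.sum_const]; ring

/-- If `A(x*) = Df(x*)ᵀ Y + Y Df(x*)` is negative definite, then there is
`ε > 0` such that `f(x)ᵀ Y (x − x*) + (x − x*)ᵀ Y f(x) < 0` whenever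
`0 < ‖x − x*‖ < ε`. -/
theorem stmt19 {n : ℕ} (f : (Fin n → ℝ) → (Fin n → ℝ))
    (Df : (Fin n → ℝ) → Matrix (Fin n) (Fin n) ℝ)
    (hf : ∀ z, HasFDerivAt f ((Df z).mulVecLin.toContinuousLinearMap) z)
    (hDf : Continuous Df)
    (xs : Fin n → ℝ) (hxs : f xs = 0)
    (Y : Matrix (Fin n) (Fin n) ℝ) (hY : Y.IsSymm)
    (hneg : ∀ v : Fin n → ℝ, v ≠ 0 →
      v ⬝ᵥ ((Df xs)ᵀ * Y + Y * Df xs).mulVec v < 0) :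
    ∃ ε > (0:ℝ), ∀ x : Fin n → ℝ, 0 < ‖x - xs‖ → ‖x - xs‖ < ε →
      f x ⬝ᵥ Y.mulVec (x - xs) + (x - xs) ⬝ᵥ Y.mulVec (f x) < 0 := by
  obtain ⟨c, hc, hcoer⟩ := stmt19_coercive _ hneg
  set M := Df xs with hM
  set L := Y.mulVecLin.toContinuousLinearMap with hL
  set K : ℝ := n * ‖L‖ with hK
  have hK0 : 0 ≤ K := by positivity
  have hYbound : ∀ a b : Fin n → ℝ, |a ⬝ᵥ Y.mulVec b| ≤ K * ‖a‖ * ‖b‖ := by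
    intro a b
    calc |a ⬝ᵥ Y.mulVec b| ≤ n * ‖a‖ * ‖Y.mulVec b‖ := stmt19_dot_bound _ _
      _ = n * ‖a‖ * ‖L b‖ := rfl
      _ ≤ n * ‖a‖ * (‖L‖ * ‖b‖) := by
          apply mul_le_mul_of_nonneg_left (L.le_opNorm b) (by positivity)
      _ = K * ‖a‖ * ‖b‖ := by ring
  -- little-o bound on the remainder
  have hlo := (hf xs).isLittleO
  have hδ : 0 < c / (2 * (K + 1)) := by positivity
  have hev := hlo.def hδ
  rw [Metric.eventually_nhds_iff] at hev
  obtain ⟨ε, hε, hevb⟩ := hev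
  refine ⟨ε, hε, fun x hx0 hxε => ?_⟩
  set v := x - xs with hv
  have hvne : v ≠ 0 := by
    intro h; rw [h] at hx0; simp at hx0
  set r := f x - f xs - M.mulVec v with hr
  have hrb : ‖r‖ ≤ c / (2 * (K + 1)) * ‖v‖ := by
    have := hevb (y := x) (by rw [dist_eq_norm]; exact hxε)
    exact this
  have hfx : f x = M.mulVec v + r := by
    rw [hr, hxs]
    abel
  have hquad : (M.mulVec v) ⬝ᵥ Y.mulVec v + v ⬝ᵥ Y.mulVec (M.mulVec v)
      = v ⬝ᵥ (Mᵀ * Y + Y * M).mulVec v := by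
    rw [Matrix.add_mulVec, dotProduct_add, ← Matrix.mulVec_mulVec,
      ← Matrix.mulVec_mulVec, Matrix.dotProduct_mulVec v Mᵀ,
      Matrix.vecMul_transpose]
  have hsplit : f x ⬝ᵥ Y.mulVec v + v ⬝ᵥ Y.mulVec (f x)
      = v ⬝ᵥ (Mᵀ * Y + Y * M).mulVec v + (r ⬝ᵥ Y.mulVec v + v ⬝ᵥ Y.mulVec r) := by
    rw [hfx, add_dotProduct, Matrix.mulVec_add, dotProduct_add, ← hquad]
    ring
  have h1 : v ⬝ᵥ (Mᵀ * Y + Y * M).mulVec v ≤ -c * ‖v‖^2 := hcoer v hvne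
  have h2 : r ⬝ᵥ Y.mulVec v ≤ K * ‖r‖ * ‖v‖ := le_of_abs_le (hYbound r v)
  have h3 : v ⬝ᵥ Y.mulVec r ≤ K * ‖v‖ * ‖r‖ := le_of_abs_le (hYbound v r)
  have h4 : K * ‖r‖ * ‖v‖ ≤ K * (c / (2 * (K + 1)) * ‖v‖) * ‖v‖ := by
    apply mul_le_mul_of_nonneg_right _ (norm_nonneg v)
    exact mul_le_mul_of_nonneg_left hrb hK0
  have hKfrac : K * (c / (2 * (K + 1))) < c / 2 := by
    have h1' : K * (c / (2 * (K + 1))) = c * K / (2 * (K + 1)) := by ring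
    rw [h1', div_lt_div_iff₀ (by positivity) (by norm_num : (0:ℝ) < 2)]
    nlinarith
  have hvpos : 0 < ‖v‖^2 := by positivity
  have hfinal : -c * ‖v‖^2 + 2 * (K * (c / (2 * (K + 1)) * ‖v‖) * ‖v‖) < 0 := by
    have heq : K * (c / (2 * (K + 1)) * ‖v‖) * ‖v‖ = (K * (c / (2 * (K + 1)))) * ‖v‖^2 := by
      ring
    rw [heq]
    have := mul_lt_mul_of_pos_right hKfrac hvpos
    nlinarith
  rw [hsplit]
  calc v ⬝ᵥ (Mᵀ * Y + Y * M).mulVec v + (r ⬝ᵥ Y.mulVec v + v ⬝ᵥ Y.mulVec r)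
      ≤ -c * ‖v‖^2 + (K * ‖r‖ * ‖v‖ + K * ‖v‖ * ‖r‖) := by
        apply add_le_add h1 (add_le_add h2 h3)
    _ = -c * ‖v‖^2 + 2 * (K * ‖r‖ * ‖v‖) := by ring
    _ ≤ -c * ‖v‖^2 + 2 * (K * (c / (2 * (K + 1)) * ‖v‖) * ‖v‖) := by linarith [h4]
    _ < 0 := hfinal
end
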